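/- Let f_1, …, f_k be McNaughton functions on [0,1]^n, let C_Φ ⊆ ℝ^k be the convex hull of {(f_1(x), …, f_k(x)) : x ∈ [0,1]^n}, and let β be a book on f_1, …, f_k. Then β is coherent if and only if the point (β_1, …, β_k) belongs to C_Φ. -/

import Mathlib

open Set MeasureTheory

/-- The unit cube `[0,1]^n` in `ℝ^n`. -/
def cube (n : ℕ) : Set (Fin n → ℝ) := Set.Icc 0 1

/-- `f` is a McNaughton function on `[0,1]^n`: continuous on the cube, `[0,1]`-valued there,
and piecewise affine with integer coefficients. -/
def IsMcNaughton (n : ℕ) (f : (Fin n → ℝ) → ℝ) : Prop :=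
  ContinuousOn f (cube n) ∧
  (∀ x ∈ cube n, f x ∈ Set.Icc (0 : ℝ) 1) ∧
  ∃ (m : ℕ) (a : Fin m → Fin n → ℤ) (b : Fin m → ℤ),
    ∀ x ∈ cube n, ∃ j : Fin m, f x = (b j : ℝ) + ∑ i, (a j i : ℝ) * x i

/-- The book `β` on `f 0, …, f (k-1)` is coherent: for every choice of stakes `σ`,
the bookmaker's balance is nonnegative under some valuation. -/
def Coherent (n k : ℕ) (f : Fin k → (Fin n → ℝ) → ℝ) (β : Fin k → ℝ) : Prop :=
  ∀ σ : Fin k → ℝ, ∃ x ∈ cube n, 0 ≤ ∑ i, σ i * (β i - f i x)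

open Classical in
/-- The convex hull of a compact nonempty set in `Fin k → ℝ` is compact. -/
lemma isCompact_convexHull_aux {k : ℕ} {s : Set (Fin k → ℝ)} (hs : IsCompact s)
    (hne : s.Nonempty) : IsCompact (convexHull ℝ s) := by
  obtain ⟨y0, hy0⟩ := hne
  set N := k + 1 with hN
  set T : Set ((Fin N → ℝ) × (Fin N → (Fin k → ℝ))) :=
    stdSimplex ℝ (Fin N) ×ˢ Set.pi Set.univ (fun _ => s) with hT
  set F : ((Fin N → ℝ) × (Fin N → (Fin k → ℝ))) → (Fin k → ℝ) :=
    fun p => ∑ i, p.1 i • p.2 i with hF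
  have hTc : IsCompact T := (isCompact_stdSimplex (𝕜 := ℝ) (ι := Fin N)).prod (isCompact_univ_pi fun _ => hs)
  have hFc : Continuous F := by
    apply continuous_finset_sum
    intro i _
    exact ((continuous_apply i).comp continuous_fst).smul
      ((continuous_apply i).comp continuous_snd)
  have heq : convexHull ℝ s = F '' T := by
    apply Set.Subset.antisymm
    · intro x hx
      obtain ⟨ι, hfin, z, w, hzs, hai, hpos, hsum, hx⟩ :=
        eq_pos_convex_span_of_mem_convexHull hx
      have hcard : Fintype.card ι ≤ N := by
        have h1 := hai.card_le_finrank_succ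
        have h2 : Module.finrank ℝ ↥(vectorSpan ℝ (Set.range z)) ≤ Module.finrank ℝ (Fin k → ℝ) :=
          Submodule.finrank_le _
        have h3 : Module.finrank ℝ (Fin k → ℝ) = k := by
          rw [Module.finrank_pi ℝ, Fintype.card_fin]
        omega
      obtain ⟨e⟩ : Nonempty (ι ↪ Fin N) :=
        Function.Embedding.nonempty_of_card_le (by simpa using hcard)
      set w' : Fin N → ℝ := Function.extend e w 0 with hw'
      set z' : Fin N → (Fin k → ℝ) := Function.extend e z (fun _ => y0) with hz'
      have hsum_eq : ∀ (g : ℝ → (Fin k → ℝ) → (Fin k → ℝ)),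
          (∀ c, g 0 c = 0) → ∑ j, g (w' j) (z' j) = ∑ i, g (w i) (z i) := by
        intro g hg0
        have h1 : ∑ j ∈ Finset.univ.image e, g (w' j) (z' j) = ∑ j, g (w' j) (z' j) := by
          apply Finset.sum_subset (Finset.subset_univ _)
          intro j _ hj
          have : ¬∃ i, e i = j := by
            intro ⟨i, hi⟩; exact hj (Finset.mem_image.2 ⟨i, Finset.mem_univ i, hi⟩)
          rw [hw', Function.extend_apply' _ _ _ this, Pi.zero_apply, hg0]
        rw [← h1, Finset.sum_image (fun a _ b _ h => e.injective h)]
        apply Finset.sum_congr rfl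
        intro i _
        rw [hw', hz', e.injective.extend_apply, e.injective.extend_apply]
      refine ⟨(w', z'), ⟨⟨fun j => ?_, ?_⟩, fun j _ => ?_⟩, ?_⟩
      · show 0 ≤ Function.extend (⇑e) w 0 j
        rcases _root_.em (∃ i, e i = j) with ⟨i, rfl⟩ | hj
        · rw [e.injective.extend_apply]; exact (hpos i).le
        · rw [Function.extend_apply' _ _ _ hj]; exact le_refl _
      · show ∑ j, w' j = 1
        have hs1 : ∑ j, w' j = ∑ i, w i := by
          have h1 : ∑ j ∈ Finset.univ.image e, w' j = ∑ j, w' j := by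
            apply Finset.sum_subset (Finset.subset_univ _)
            intro j _ hj
            have : ¬∃ i, e i = j := by
              intro ⟨i, hi⟩; exact hj (Finset.mem_image.2 ⟨i, Finset.mem_univ i, hi⟩)
            rw [hw', Function.extend_apply' _ _ _ this, Pi.zero_apply]
          rw [← h1, Finset.sum_image (fun a _ b _ h => e.injective h)]
          exact Finset.sum_congr rfl fun i _ => by rw [hw', e.injective.extend_apply]
        rw [hs1, hsum]
      · show Function.extend (⇑e) z (fun _ => y0) j ∈ s
        rcases _root_.em (∃ i, e i = j) with ⟨i, rfl⟩ | hj
        · rw [e.injective.extend_apply]; exact hzs ⟨i, rfl⟩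
        · rw [Function.extend_apply' _ _ _ hj]; exact hy0
      · show ∑ j, w' j • z' j = x
        rw [hsum_eq (fun c v => c • v) (fun c => zero_smul ℝ c)]
        exact hx
    · rintro _ ⟨⟨w, z⟩, ⟨hw, hz⟩, rfl⟩
      exact (convex_convexHull ℝ s).sum_mem (fun i _ => hw.1 i) hw.2
        (fun i _ => subset_convexHull ℝ s (hz i (Set.mem_univ i)))
  rw [heq]
  exact hTc.image hFc

theorem stmt11 (n k : ℕ) (f : Fin k → (Fin n → ℝ) → ℝ) (hf : ∀ i, IsMcNaughton n (f i))
    (β : Fin k → ℝ) (hβ : ∀ i, β i ∈ Set.Icc (0 : ℝ) 1) :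
    Coherent n k f β ↔ β ∈ convexHull ℝ ((fun x => fun i => f i x) '' cube n) := by
  constructor
  · intro hc
    by_contra hβ'
    have hcube : IsCompact (cube n) := isCompact_Icc
    have hcont : ContinuousOn (fun x => fun i => f i x) (cube n) :=
      continuousOn_pi.2 fun i => (hf i).1
    have himg : IsCompact ((fun x => fun i => f i x) '' cube n) :=
      hcube.image_of_continuousOn hcont
    have hhull : IsCompact (convexHull ℝ ((fun x => fun i => f i x) '' cube n)) :=
      isCompact_convexHull_aux himg ⟨(fun i => f i 0), 0, ⟨le_refl _, fun i => by norm_num⟩, rfl⟩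
    obtain ⟨φ, u, hβu, hu⟩ := geometric_hahn_banach_point_closed
      (convex_convexHull ℝ _) hhull.isClosed hβ'
    have key : ∀ y : Fin k → ℝ, φ y = ∑ i, φ (Pi.single i 1) * y i := by
      intro y
      have hy : y = ∑ i, y i • (Pi.single i (1 : ℝ) : Fin k → ℝ) := by
        ext j
        simp [Finset.sum_apply, Pi.single_apply]
      calc φ y = φ (∑ i, y i • (Pi.single i (1 : ℝ) : Fin k → ℝ)) := by rw [← hy]
        _ = ∑ i, (y i) * φ (Pi.single i 1) := by
              rw [map_sum]; simp [smul_eq_mul]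
        _ = ∑ i, φ (Pi.single i 1) * y i := by
              simp [mul_comm]
    obtain ⟨x, hx, hge⟩ := hc (fun i => φ (Pi.single i 1))
    have hmemx : (fun i => f i x) ∈ convexHull ℝ ((fun x => fun i => f i x) '' cube n) :=
      subset_convexHull ℝ _ ⟨x, hx, rfl⟩
    have h1 : φ β < φ (fun i => f i x) := lt_trans hβu (hu _ hmemx)
    have h2 : ∑ i, φ (Pi.single i 1) * (β i - f i x)
        = φ β - φ (fun i => f i x) := by
      rw [key β, key (fun i => f i x), ← Finset.sum_sub_distrib]
      exact Finset.sum_congr rfl fun i _ => by ring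
    rw [h2] at hge
    linarith
  · intro hmem σ
    by_contra h
    push_neg at h
    set g : (Fin k → ℝ) → ℝ := fun y => ∑ i, σ i * y i with hg
    have hlin : IsLinearMap ℝ g := by
      constructor
      · intro y z
        simp [hg, mul_add, Finset.sum_add_distrib]
      · intro c y
        simp [hg, Finset.mul_sum]
        exact Finset.sum_congr rfl fun i _ => by ring
    have hsub : ((fun x => fun i => f i x) '' cube n) ⊆ {y | g β < g y} := by
      rintro _ ⟨x, hx, rfl⟩
      have hlt := h x hx
      have hexp : ∑ i, σ i * (β i - f i x) = g β - g (fun i => f i x) := by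
        simp only [hg, ← Finset.sum_sub_distrib]
        exact Finset.sum_congr rfl fun i _ => by ring
      rw [hexp] at hlt
      simpa using by linarith
    have : convexHull ℝ ((fun x => fun i => f i x) '' cube n) ⊆ {y | g β < g y} :=
      convexHull_min hsub (convex_halfSpace_gt hlin (g β))
    have h' : g β < g β := this hmem
    exact lt_irrefl _ h'
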